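/- Let 𝓛 (18×18), V (18×6) and A (6×6) be the explicit real matrices of the random walker slow subspace, satisfying 𝓛V = VA with the columns of V linearly independent. If y : ℝ → ℝ¹⁸ is differentiable with y′(t) = 𝓛y(t) for all t and y(0) lies in the column space of V, then there is a unique differentiable c : ℝ → ℝ⁶ with y(t) = Vc(t) for all t; this c satisfies c′ = Ac, and in particular, writing c = (c₀₀, c₁₀, c₀₁, c₂₀, c₁₁, c₀₂), the first coordinate obeys c₀₀′(t) = −(1/3)c₁₀(t) + (8/27)c₂₀(t) + (2/3)c₀₂(t). -/

import Mathlib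

/-- `L₀₀ = diag(0,−1,−3)`. -/
noncomputable def L00 : Matrix (Fin 3) (Fin 3) ℝ := !![0,0,0; 0,-1,0; 0,0,-3]

/-- `L₁₀`. -/
noncomputable def L10 : Matrix (Fin 3) (Fin 3) ℝ := !![-1/3,0,-4/3; 0,-1,0; -2/3,0,1/3]

/-- `L₀₁`. -/
noncomputable def L01 : Matrix (Fin 3) (Fin 3) ℝ := !![0,-2/3,0; -1,0,-1; 0,-1/3,0]

/-- The 6×6 array of 3×3 blocks building `𝓛`. -/
noncomputable def blockOf : Fin 6 → Fin 6 → Matrix (Fin 3) (Fin 3) ℝ := fun i j =>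
  if i = j then L00
  else if (i, j) = (0, 1) ∨ (i, j) = (1, 3) ∨ (i, j) = (2, 4) then L10
  else if (i, j) = (0, 2) ∨ (i, j) = (1, 4) ∨ (i, j) = (2, 5) then L01
  else 0

/-- The explicit 18×18 block matrix `𝓛`. -/
noncomputable def calL : Matrix (Fin 18) (Fin 18) ℝ :=
  Matrix.of fun i j =>
    blockOf ⟨i.val / 3, by omega⟩ ⟨j.val / 3, by omega⟩
      ⟨i.val % 3, by omega⟩ ⟨j.val % 3, by omega⟩

/-- the standard basis vector `eₖ` of `ℝ¹⁸` (0-indexed: `stdE 0 = e₁`, …). -/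
noncomputable def stdE (k : Fin 18) : Fin 18 → ℝ := fun i => if i = k then 1 else 0

/-- the 18×6 matrix `V` of slow-subspace basis vectors. -/
noncomputable def Vmat : Matrix (Fin 18) (Fin 6) ℝ :=
  Matrix.of fun i j =>
    (![ stdE 0,
        -(2/9 : ℝ) • stdE 2 + stdE 3,
        -stdE 1 + stdE 6,
        -(4/81 : ℝ) • stdE 2 - (2/9 : ℝ) • stdE 5 + stdE 9,
        (8/9 : ℝ) • stdE 1 - stdE 4 - (2/9 : ℝ) • stdE 8 + stdE 12,
        (1/9 : ℝ) • stdE 2 - stdE 7 + stdE 15 ] j) i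

/-- the 6×6 matrix `A`. -/
noncomputable def Amat : Matrix (Fin 6) (Fin 6) ℝ :=
  !![0, -1/3, 0, 8/27, 0, 2/3;
     0, 0, 0, -1/3, 0, 0;
     0, 0, 0, 0, -1/3, 0;
     0, 0, 0, 0, 0, 0;
     0, 0, 0, 0, 0, 0;
     0, 0, 0, 0, 0, 0]


/-! ### Auxiliary integer-scaled matrices: `Li = 27𝓛`, `Vi = 81V`, `Ai = 27A`. -/

def L00i : Matrix (Fin 3) (Fin 3) ℤ := !![0,0,0; 0,-27,0; 0,0,-81]
def L10i : Matrix (Fin 3) (Fin 3) ℤ := !![-9,0,-36; 0,-27,0; -18,0,9]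
def L01i : Matrix (Fin 3) (Fin 3) ℤ := !![0,-18,0; -27,0,-27; 0,-9,0]
def blockOfI : Fin 6 → Fin 6 → Matrix (Fin 3) (Fin 3) ℤ := fun i j =>
  if i = j then L00i
  else if (i, j) = (0, 1) ∨ (i, j) = (1, 3) ∨ (i, j) = (2, 4) then L10i
  else if (i, j) = (0, 2) ∨ (i, j) = (1, 4) ∨ (i, j) = (2, 5) then L01i
  else 0
def Li : Matrix (Fin 18) (Fin 18) ℤ :=
  Matrix.of fun i j =>
    blockOfI ⟨i.val / 3, by omega⟩ ⟨j.val / 3, by omega⟩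
      ⟨i.val % 3, by omega⟩ ⟨j.val % 3, by omega⟩
def stdEi (k : Fin 18) : Fin 18 → ℤ := fun i => if i = k then 1 else 0
def Vi : Matrix (Fin 18) (Fin 6) ℤ :=
  Matrix.of fun i j =>
    (![ (81:ℤ) • stdEi 0,
        -(18 : ℤ) • stdEi 2 + (81:ℤ) • stdEi 3,
        -(81:ℤ) • stdEi 1 + (81:ℤ) • stdEi 6,
        -(4 : ℤ) • stdEi 2 - (18 : ℤ) • stdEi 5 + (81:ℤ) • stdEi 9,
        (72 : ℤ) • stdEi 1 - (81:ℤ) • stdEi 4 - (18 : ℤ) • stdEi 8 + (81:ℤ) • stdEi 12,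
        (9 : ℤ) • stdEi 2 - (81:ℤ) • stdEi 7 + (81:ℤ) • stdEi 15 ] j) i
def Ai : Matrix (Fin 6) (Fin 6) ℤ :=
  !![0, -9, 0, 8, 0, 18;
     0, 0, 0, -9, 0, 0;
     0, 0, 0, 0, -9, 0;
     0, 0, 0, 0, 0, 0;
     0, 0, 0, 0, 0, 0;
     0, 0, 0, 0, 0, 0]
def Wi : Matrix (Fin 6) (Fin 18) ℤ :=
  Matrix.of fun j i => if (i : ℕ) = 3 * (j : ℕ) then 1 else 0

set_option maxHeartbeats 2000000 in
lemma key_i : Li * Vi = Vi * Ai := by decide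
set_option maxHeartbeats 2000000 in
lemma wv_i : Wi * Vi = Matrix.diagonal (fun _ => (81:ℤ)) := by decide
set_option maxHeartbeats 2000000 in
lemma a3_i : Ai * Ai * Ai = 0 := by decide

/-- The real left inverse of `Vmat`. -/
noncomputable def Wmat : Matrix (Fin 6) (Fin 18) ℝ :=
  Matrix.of fun j i => if (i : ℕ) = 3 * (j : ℕ) then 1 else 0

lemma block_cast (i j : Fin 6) (a b : Fin 3) :
    blockOf i j a b = (27:ℝ)⁻¹ * ((blockOfI i j a b : ℤ) : ℝ) := by
  unfold blockOf blockOfI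
  split_ifs with h1 h2 h3
  · fin_cases a <;> fin_cases b <;> norm_num [L00, L00i]
  · fin_cases a <;> fin_cases b <;> norm_num [L10, L10i]
  · fin_cases a <;> fin_cases b <;> norm_num [L01, L01i]
  · simp

lemma hLcast : calL = (27:ℝ)⁻¹ • Li.map (Int.cast : ℤ → ℝ) := by
  ext i j
  simp only [calL, Li, Matrix.of_apply, Matrix.smul_apply, Matrix.map_apply, smul_eq_mul]
  exact block_cast _ _ _ _

lemma cv5 {α} (a : α) (s : Fin 5 → α) : Matrix.vecCons a s 5 = s 4 := rfl
lemma cv4 {α} (a b c d e f : α) : ![a,b,c,d,e,f] 4 = e := rfl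

set_option maxHeartbeats 3000000 in
lemma hVcast : Vmat = (81:ℝ)⁻¹ • Vi.map (Int.cast : ℤ → ℝ) := by
  ext i j
  simp only [Vmat, Vi, Matrix.of_apply, Matrix.smul_apply, Matrix.map_apply, smul_eq_mul]
  fin_cases j <;>
    simp only [Matrix.cons_val_zero, Matrix.cons_val_one, Matrix.head_cons, Fin.mk_zero,
      Fin.mk_one, Matrix.cons_val_two, Matrix.tail_cons, Matrix.cons_val_three,
      Matrix.cons_val_four, Pi.add_apply, Pi.sub_apply, Pi.smul_apply, Pi.neg_apply,
      stdE, stdEi, smul_eq_mul] <;>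
    simp [stdE, stdEi, cv5, cv4, apply_ite (Int.cast : ℤ → ℝ)]
  all_goals split_ifs <;> norm_num

lemma hAcast : Amat = (27:ℝ)⁻¹ • Ai.map (Int.cast : ℤ → ℝ) := by
  ext i j
  fin_cases i <;> fin_cases j <;>
    norm_num [Amat, Ai, Matrix.smul_apply, Matrix.map_apply]

lemma hWcast : Wmat = Wi.map (Int.cast : ℤ → ℝ) := by
  ext i j
  simp only [Wmat, Wi, Matrix.of_apply, Matrix.map_apply, apply_ite (Int.cast : ℤ → ℝ)]
  norm_num

lemma castFun : (Int.cast : ℤ → ℝ) = ⇑(Int.castRingHom ℝ) := rfl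

lemma hLV : calL * Vmat = Vmat * Amat := by
  rw [hLcast, hVcast, hAcast]
  simp only [Matrix.smul_mul, Matrix.mul_smul, smul_smul]
  rw [castFun, ← Matrix.map_mul, ← Matrix.map_mul, key_i, mul_comm]

lemma hA3 : Amat * Amat * Amat = 0 := by
  rw [hAcast]
  simp only [Matrix.smul_mul, Matrix.mul_smul, smul_smul]
  rw [castFun, ← Matrix.map_mul, ← Matrix.map_mul, a3_i]
  simp

lemma hWV : Wmat * Vmat = 1 := by
  rw [hWcast, hVcast, Matrix.mul_smul, castFun, ← Matrix.map_mul, wv_i]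
  ext i j
  simp [Matrix.map_apply, Matrix.smul_apply, Matrix.diagonal_apply, Matrix.one_apply,
    apply_ite (Int.cast : ℤ → ℝ)]

lemma WV_mulVec (x : Fin 6 → ℝ) : Wmat.mulVec (Vmat.mulVec x) = x := by
  rw [Matrix.mulVec_mulVec, hWV, Matrix.one_mulVec]

lemma ode_unique {E : Type*} [NormedAddCommGroup E] [NormedSpace ℝ E] {K : NNReal}
    {v : E → E} (hv : LipschitzWith K v) {f g : ℝ → E}
    (hf : ∀ t, HasDerivAt f (v (f t)) t) (hg : ∀ t, HasDerivAt g (v (g t)) t)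
    (h0 : f 0 = g 0) : f = g := by
  funext t
  have hmem : t ∈ Set.Ioo (-(|t|+1)) (|t|+1) :=
    ⟨by cases abs_cases t <;> linarith, by cases abs_cases t <;> linarith⟩
  have h0mem : (0:ℝ) ∈ Set.Ioo (-(|t|+1)) (|t|+1) :=
    ⟨by have := abs_nonneg t; linarith, by have := abs_nonneg t; linarith⟩
  exact ODE_solution_unique_of_mem_Ioo (v := fun _ => v) (s := fun _ => Set.univ)
    (fun _ _ => hv.lipschitzOnWith) h0mem
    (fun t' _ => ⟨hf t', trivial⟩) (fun t' _ => ⟨hg t', trivial⟩) h0 hmem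

noncomputable def Vclm : (Fin 6 → ℝ) →L[ℝ] (Fin 18 → ℝ) :=
  LinearMap.toContinuousLinearMap (Matrix.mulVecLin Vmat)
noncomputable def Wclm : (Fin 18 → ℝ) →L[ℝ] (Fin 6 → ℝ) :=
  LinearMap.toContinuousLinearMap (Matrix.mulVecLin Wmat)
noncomputable def Lclm : (Fin 18 → ℝ) →L[ℝ] (Fin 18 → ℝ) :=
  LinearMap.toContinuousLinearMap (Matrix.mulVecLin calL)

lemma Vclm_apply (x : Fin 6 → ℝ) : Vclm x = Vmat.mulVec x := rfl
lemma Wclm_apply (x : Fin 18 → ℝ) : Wclm x = Wmat.mulVec x := rfl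
lemma Lclm_apply (x : Fin 18 → ℝ) : Lclm x = calL.mulVec x := rfl
/-- If `y′ = 𝓛y` and `y(0)` lies in the column space of `V`, then there is a unique
differentiable `c : ℝ → ℝ⁶` with `y = Vc`; this `c` satisfies `c′ = Ac`, and its first
coordinate obeys `c₀₀′ = −(1/3)c₁₀ + (8/27)c₂₀ + (2/3)c₀₂`. -/
theorem slow_subspace_solution_reduction
    (y : ℝ → Fin 18 → ℝ)
    (hy : ∀ t : ℝ, HasDerivAt y (calL.mulVec (y t)) t)
    (hy0 : ∃ c₀ : Fin 6 → ℝ, y 0 = Vmat.mulVec c₀) :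
    (∃! c : ℝ → Fin 6 → ℝ,
      Differentiable ℝ c ∧ ∀ t : ℝ, y t = Vmat.mulVec (c t)) ∧
    (∀ c : ℝ → Fin 6 → ℝ,
      (Differentiable ℝ c ∧ ∀ t : ℝ, y t = Vmat.mulVec (c t)) →
      (∀ t : ℝ, HasDerivAt c (Amat.mulVec (c t)) t) ∧
      (∀ t : ℝ, HasDerivAt (fun s => c s 0)
        (-(1/3) * c t 1 + (8/27) * c t 3 + (2/3) * c t 5) t)) := by
  obtain ⟨c₀, h0⟩ := hy0
  have hLip : LipschitzWith ‖Lclm‖₊ (fun x : Fin 18 → ℝ => calL.mulVec x) := by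
    have h := Lclm.lipschitz
    have he : ⇑Lclm = fun x : Fin 18 → ℝ => calL.mulVec x := funext fun x => Lclm_apply x
    rwa [he] at h
  have keyWLV : Wmat * calL * Vmat = Amat := by
    rw [Matrix.mul_assoc, hLV, ← Matrix.mul_assoc, hWV, Matrix.one_mul]
  -- Any differentiable representation satisfies c' = A c.
  have main2 : ∀ c : ℝ → Fin 6 → ℝ,
      (Differentiable ℝ c ∧ ∀ t : ℝ, y t = Vmat.mulVec (c t)) →
      (∀ t : ℝ, HasDerivAt c (Amat.mulVec (c t)) t) := by
    rintro c ⟨hd, hr⟩ t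
    have hcW : c = fun t => Wmat.mulVec (y t) := by
      funext s
      rw [hr s, WV_mulVec]
    have hct : c t = Wmat.mulVec (y t) := by rw [hcW]
    have h1 : HasDerivAt (fun s => Wmat.mulVec (y s)) (Wmat.mulVec (calL.mulVec (y t))) t := by
      have := Wclm.hasFDerivAt.comp_hasDerivAt t (hy t)
      simpa [Function.comp_def, Wclm_apply] using this
    have h1' : HasDerivAt c (Wmat.mulVec (calL.mulVec (y t))) t := by
      rw [hcW]; exact h1
    have h2 : Wmat.mulVec (calL.mulVec (y t)) = Amat.mulVec (c t) := by
      conv_lhs => rw [hr t]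
      simp only [Matrix.mulVec_mulVec]
      rw [← Matrix.mul_assoc, keyWLV]
    rwa [h2] at h1'
  -- The explicit polynomial solution of c' = A c with c 0 = c₀.
  have hA3v : ∀ x : Fin 6 → ℝ, Amat.mulVec (Amat.mulVec (Amat.mulVec x)) = 0 := by
    intro x
    simp only [Matrix.mulVec_mulVec]
    rw [← Matrix.mul_assoc, hA3, Matrix.zero_mulVec]
  set a1 : Fin 6 → ℝ := Amat.mulVec c₀ with ha1
  set a2 : Fin 6 → ℝ := Amat.mulVec a1 with ha2
  set c : ℝ → Fin 6 → ℝ := fun t => c₀ + t • a1 + (t ^ 2 / 2) • a2 with hc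
  have hc0 : c 0 = c₀ := by simp [hc]
  have hcD : ∀ t, HasDerivAt c (a1 + t • a2) t := by
    intro t
    have h1 : HasDerivAt (fun s : ℝ => c₀ + s • a1) a1 t := by
      simpa using ((hasDerivAt_id t).smul_const a1).const_add c₀
    have h3 : HasDerivAt (fun s : ℝ => s ^ 2 / 2) t t := by
      have h4 := (hasDerivAt_pow 2 t).div_const 2
      refine h4.congr_deriv ?_
      push_cast
      ring
    have h2 : HasDerivAt (fun s : ℝ => (s ^ 2 / 2) • a2) (t • a2) t := h3.smul_const a2
    exact h1.add h2
  have hA2zero : Amat.mulVec a2 = 0 := by rw [ha2, ha1]; exact hA3v c₀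
  have hAct : ∀ t, Amat.mulVec (c t) = a1 + t • a2 := by
    intro t
    simp only [hc]
    rw [Matrix.mulVec_add, Matrix.mulVec_add, Matrix.mulVec_smul, Matrix.mulVec_smul,
      ← ha1, ← ha2, hA2zero]
    simp
  have hcA : ∀ t, HasDerivAt c (Amat.mulVec (c t)) t := fun t => by
    rw [hAct t]; exact hcD t
  have hcdiff : Differentiable ℝ c := fun t => (hcA t).differentiableAt
  have hyg : y = fun t => Vmat.mulVec (c t) := by
    apply ode_unique hLip hy ?_ ?_
    · intro t
      have h1 : HasDerivAt (fun s => Vmat.mulVec (c s)) (Vmat.mulVec (Amat.mulVec (c t))) t := by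
        have := Vclm.hasFDerivAt.comp_hasDerivAt t (hcA t)
        simpa [Function.comp_def, Vclm_apply] using this
      have h2 : Vmat.mulVec (Amat.mulVec (c t)) = calL.mulVec (Vmat.mulVec (c t)) := by
        simp only [Matrix.mulVec_mulVec]
        rw [← hLV]
      rwa [h2] at h1
    · show y 0 = Vmat.mulVec (c 0)
      rw [hc0, ← h0]
  constructor
  · refine ⟨c, ⟨hcdiff, fun t => congrFun hyg t⟩, ?_⟩
    rintro c' ⟨hd', hr'⟩
    funext t
    have hv : Vmat.mulVec (c' t) = Vmat.mulVec (c t) := by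
      rw [← hr' t, congrFun hyg t]
    have := congrArg Wmat.mulVec hv
    rwa [WV_mulVec, WV_mulVec] at this
  · rintro c' ⟨hd', hr'⟩
    have hD := main2 c' ⟨hd', hr'⟩
    refine ⟨hD, fun t => ?_⟩
    have h := (hasDerivAt_pi.1 (hD t)) 0
    have hval : (Amat.mulVec (c' t)) 0
        = -(1/3) * c' t 1 + (8/27) * c' t 3 + (2/3) * c' t 5 := by
      have vh1 : Matrix.vecHead (Matrix.vecTail (c' t)) = c' t 1 := rfl
      have vh3 : Matrix.vecHead (Matrix.vecTail (Matrix.vecTail (Matrix.vecTail (c' t)))) = c' t 3 := rfl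
      have vh5 : Matrix.vecHead (Matrix.vecTail (Matrix.vecTail (Matrix.vecTail
          (Matrix.vecTail (Matrix.vecTail (c' t)))))) = c' t 5 := rfl
      simp [Amat, Matrix.mulVec, dotProduct, Fin.sum_univ_six, vh1, vh3, vh5, cv5]
      ring
    rwa [hval] at h
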